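/- Define r_{n,k} = (k+1) p_{n,k} + 4(n-k) p_{n,k-1}, where p_{n,k} are the γ-coefficients of P_n(x) (satisfying p_{1,0}=1 and p_{n+1,k} = C(k+2,2)p_{n,k} + (k+1)(4n-4k+1)p_{n,k-1} + 4C(2n-2k+2,2)p_{n,k-2}). Then R_n(x) = (1+(2n-1)x)P_n(x) + x(1-x)P_n'(x) = Σ_{k≥0} r_{n,k} x^k (1+x)^{2n-1-2k}, so R_n is γ-positive; consequently Q_n(x) = R_n(x) + x P_n(x) is bi-γ-positive. -/

import Mathlib

open Polynomial

/-- Number of descents of a word. -/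
def des (l : List ℤ) : ℕ := ((l.zip l.tail).filter (fun p => p.2 < p.1)).length

/-- Type-B descents: prepend 0. -/
def desB (l : List ℤ) : ℕ := des (0 :: l)

/-- The multiset {1,1,2,2,...,n,n} as a list. -/
def baseList (n : ℕ) : List ℤ := (List.range n).flatMap (fun i => [(i : ℤ) + 1, (i : ℤ) + 1])

/-- All distinct arrangements (multiset permutations) of a list. -/
def arrangements (l : List ℤ) : List (List ℤ) := l.permutations.dedup

/-- Descent polynomial over arrangements of `l`. -/
noncomputable def desPoly (l : List ℤ) : Polynomial ℝ :=
  ((arrangements l).map (fun w => (X : Polynomial ℝ) ^ des w)).sum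

noncomputable def Ppoly (n : ℕ) : Polynomial ℝ := desPoly (baseList n)

noncomputable def Qpoly (n : ℕ) : Polynomial ℝ := desPoly (baseList n ++ [(n : ℤ) + 1])

/-- All signings of a word. -/
def signings : List ℤ → List (List ℤ)
  | [] => [[]]
  | a :: t => (signings t).flatMap (fun w => [a :: w, (-a) :: w])

/-- All signed permutations of the multiset given by `l`. -/
def signedWords (l : List ℤ) : List (List ℤ) := (arrangements l).flatMap signings

noncomputable def SpolyB (n : ℕ) : Polynomial ℝ :=
  ((signedWords (baseList n)).map (fun w => (X : Polynomial ℝ) ^ desB w)).sum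

/-- Signed permutations of {1,1,...,n,n,n+1} in which n+1 carries a plus sign. -/
def Dwords (n : ℕ) : List (List ℤ) :=
  (signedWords (baseList n ++ [(n : ℤ) + 1])).filter (fun w => ((n : ℤ) + 1) ∈ w)

noncomputable def TpolyB (n : ℕ) : Polynomial ℝ :=
  ((Dwords n).map (fun w => (X : Polynomial ℝ) ^ desB w)).sum

def PcountZ (n : ℕ) (k : ℤ) : ℕ :=
  ((arrangements (baseList n)).filter (fun w => (des w : ℤ) = k)).length

def QcountN (n : ℕ) (k : ℕ) : ℕ :=
  ((arrangements (baseList n ++ [(n : ℤ) + 1])).filter (fun w => des w = k)).length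

def ScountZ (n : ℕ) (k : ℤ) : ℕ :=
  ((signedWords (baseList n)).filter (fun w => (desB w : ℤ) = k)).length

def TcountZ (n : ℕ) (k : ℤ) : ℕ :=
  ((Dwords n).filter (fun w => (desB w : ℤ) = k)).length



open List

lemma des_nil : des ([] : List ℤ) = 0 := rfl
lemma des_singleton (x : ℤ) : des [x] = 0 := rfl
lemma des_cons_cons (x y : ℤ) (l : List ℤ) :
    des (x :: y :: l) = (if y < x then 1 else 0) + des (y :: l) := by
  simp only [des, List.zip, List.tail, List.zipWith, List.filter]
  split <;> simp_all <;> omega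

lemma st16_Xd (d : ℕ) : (X : Polynomial ℝ) * derivative (X ^ d) = C (d : ℝ) * X ^ d := by
  cases d with
  | zero => simp
  | succ e =>
    rw [derivative_X_pow]
    push_cast
    ring

lemma st16_pointwise (n d : ℕ) :
    (1 + (2 * (n : Polynomial ℝ) - 1) * X) * X ^ d + X * (1 - X) * derivative (X ^ d)
      + X * X ^ d
    = C ((d : ℝ) + 1) * X ^ d + C (2 * (n : ℝ) - (d : ℝ)) * X ^ (d + 1) := by
  have h := st16_Xd d
  have h2 : X * (1 - X) * derivative ((X:Polynomial ℝ) ^ d)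
      = (1 - X) * ((X : Polynomial ℝ) * derivative (X ^ d)) := by ring
  rw [h2, h]
  have hC : ∀ m : ℕ, (C ((m : ℕ) : ℝ) : Polynomial ℝ) = (m : Polynomial ℝ) := by
    intro m; simp
  simp only [map_add, map_sub, map_mul, map_one, C_1, hC, map_ofNat]
  push_cast
  ring

lemma st16_listsum (n : ℕ) (L : List (List ℤ)) :
    (1 + (2 * (n : Polynomial ℝ) - 1) * X) * (L.map (fun w => (X : Polynomial ℝ) ^ des w)).sum
      + X * (1 - X) * derivative (L.map (fun w => (X : Polynomial ℝ) ^ des w)).sum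
      + X * (L.map (fun w => (X : Polynomial ℝ) ^ des w)).sum
    = (L.map (fun w => C ((des w : ℝ) + 1) * X ^ des w
        + C (2 * (n : ℝ) - (des w : ℝ)) * X ^ (des w + 1))).sum := by
  induction L with
  | nil => simp
  | cons w t ih =>
    simp only [List.map_cons, List.sum_cons, derivative_add]
    have h := st16_pointwise n (des w)
    linear_combination h + ih

lemma st16_map_mul_sum (q : Polynomial ℝ) (g : List ℤ → Polynomial ℝ) (L : List (List ℤ)) :
    (L.map (fun v => q * g v)).sum = q * (L.map g).sum := by
  induction L with
  | nil => simp
  | cons w t ih => simp [ih]; ring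

lemma st16_T (a : ℤ) (t : List ℤ) (ht : ∀ x ∈ t, x < a) :
    ∀ b : ℤ, b < a →
    ((permutations'Aux a t).map (fun v => (X : Polynomial ℝ) ^ des (b :: v))).sum
    = C ((des (b :: t) : ℝ) + 1) * X ^ des (b :: t)
      + C ((t.length : ℝ) - (des (b :: t) : ℝ)) * X ^ (des (b :: t) + 1) := by
  induction t with
  | nil =>
    intro b hb
    simp [des_cons_cons, des_singleton, not_lt.mpr hb.le]
  | cons c t' ih =>
    intro b hb
    have hc : c < a := ht c (by simp)
    have ht' : ∀ x ∈ t', x < a := fun x hx => ht x (by simp [hx])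
    simp only [permutations'Aux, List.map_cons, List.sum_cons, List.map_map]
    have hmap : ((permutations'Aux a t').map ((fun v => (X : Polynomial ℝ) ^ des (b :: v)) ∘ cons c)).sum
        = (X : Polynomial ℝ) ^ (if c < b then 1 else 0) *
          ((permutations'Aux a t').map (fun v => (X : Polynomial ℝ) ^ des (c :: v))).sum := by
      rw [← st16_map_mul_sum]
      congr 1
      apply List.map_congr_left
      intro v hv
      simp only [Function.comp_apply, des_cons_cons, pow_add]
    rw [hmap, ih ht' c hc]
    have h1 : des (b :: a :: c :: t') = des (c :: t') + 1 := by
      rw [des_cons_cons, des_cons_cons]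
      simp [not_lt.mpr hb.le, hc]
      omega
    have h2 : des (b :: c :: t') = (if c < b then 1 else 0) + des (c :: t') := des_cons_cons _ _ _
    rw [h1, h2]
    by_cases hcb : c < b
    · simp only [if_pos hcb]
      simp only [List.length_cons]
      push_cast
      simp only [map_add, map_sub, map_one, map_mul, map_zero]
      ring
    · simp only [if_neg hcb]
      simp only [List.length_cons]
      push_cast
      simp only [map_add, map_sub, map_one, map_mul, map_zero]
      ring

lemma st16_S (a : ℤ) (w : List ℤ) (hw : ∀ x ∈ w, x < a) :
    ((permutations'Aux a w).map (fun v => (X : Polynomial ℝ) ^ des v)).sum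
    = C ((des w : ℝ) + 1) * X ^ des w
      + C ((w.length : ℝ) - (des w : ℝ)) * X ^ (des w + 1) := by
  cases w with
  | nil => simp [des_nil, des_singleton]
  | cons b t =>
    have hb : b < a := hw b (by simp)
    have ht : ∀ x ∈ t, x < a := fun x hx => hw x (by simp [hx])
    simp only [permutations'Aux, List.map_cons, List.sum_cons, List.map_map]
    have hmap : ((permutations'Aux a t).map ((fun v => (X : Polynomial ℝ) ^ des v) ∘ cons b)).sum
        = ((permutations'Aux a t).map (fun v => (X : Polynomial ℝ) ^ des (b :: v))).sum := by
      congr 1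
    rw [hmap, st16_T a t ht b hb]
    have h1 : des (a :: b :: t) = des (b :: t) + 1 := by
      rw [des_cons_cons]; simp [hb]; omega
    rw [h1]
    simp only [List.length_cons]
    push_cast
    simp only [map_add, map_sub, map_one, map_mul, map_zero]
    ring

lemma st16_erase (a : ℤ) : ∀ (w : List ℤ), a ∉ w → ∀ v ∈ permutations'Aux a w, v.erase a = w := by
  intro w
  induction w with
  | nil => intro _ v hv; simp at hv; simp [hv]
  | cons b t ih =>
    intro ha v hv
    have hab : a ≠ b := fun h => ha (h ▸ List.mem_cons_self (a := b) (l := t))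
    simp only [permutations'Aux, List.mem_cons, List.mem_map] at hv
    rcases hv with rfl | ⟨v', hv', rfl⟩
    · simp
    · rw [List.erase_cons_tail (by simp [hab.symm])]
      rw [ih (fun h => ha (List.mem_cons_of_mem b h)) v' hv']

lemma st16_dedup_perm (a : ℤ) (l : List ℤ) (ha : a ∉ l) :
    (permutations' (a :: l)).dedup ~ ((permutations' l).dedup).flatMap (permutations'Aux a) := by
  have hmemaux : ∀ w ∈ (permutations' l).dedup, a ∉ w := by
    intro w hw
    have : w ~ l := mem_permutations'.mp (List.mem_dedup.mp hw)
    exact fun h => ha (this.mem_iff.mp h)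
  have hnd : (((permutations' l).dedup).flatMap (permutations'Aux a)).Nodup := by
    rw [List.nodup_flatMap]
    constructor
    · intro w hw
      exact nodup_permutations'Aux_of_notMem _ _ (hmemaux w hw)
    · apply List.Pairwise.imp_of_mem ?_ (List.nodup_dedup _)
      intro w w' hw hw' hne
      intro v hv hv'
      exact hne ((st16_erase a w (hmemaux w hw) v hv).symm.trans
        (st16_erase a w' (hmemaux w' hw') v hv'))
  rw [List.perm_ext_iff_of_nodup (List.nodup_dedup _) hnd]
  intro v
  simp only [List.mem_dedup, permutations', List.mem_flatMap]

lemma st16_sum_flatMap (f : List ℤ → List (List ℤ)) (g : List ℤ → Polynomial ℝ)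
    (L : List (List ℤ)) :
    ((L.flatMap f).map g).sum = (L.map (fun w => ((f w).map g).sum)).sum := by
  induction L with
  | nil => simp
  | cons w t ih => simp [List.flatMap_cons, ih]

lemma st16_desPoly_perm (l l' : List ℤ) (h : l ~ l') : desPoly l = desPoly l' := by
  unfold desPoly arrangements
  exact ((h.permutations.dedup).map _).sum_eq

lemma st16_Qeq (a : ℤ) (l : List ℤ) (ha : ∀ x ∈ l, x < a) :
    desPoly (l ++ [a]) = ((arrangements l).map (fun w => C ((des w : ℝ) + 1) * X ^ des w
        + C ((l.length : ℝ) - (des w : ℝ)) * X ^ (des w + 1))).sum := by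
  have hal : a ∉ l := fun h => lt_irrefl a (ha a h)
  rw [st16_desPoly_perm _ _ (List.perm_append_singleton a l)]
  unfold desPoly arrangements
  rw [((List.permutations_perm_permutations' (a :: l)).dedup.map _).sum_eq]
  rw [((st16_dedup_perm a l hal).map _).sum_eq]
  rw [st16_sum_flatMap]
  have h1 : ((permutations' l).dedup.map (fun w =>
      ((permutations'Aux a w).map (fun v => (X : Polynomial ℝ) ^ des v)).sum)).sum
      = ((permutations' l).dedup.map (fun w => C ((des w : ℝ) + 1) * X ^ des w
        + C ((l.length : ℝ) - (des w : ℝ)) * X ^ (des w + 1))).sum := by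
    congr 1
    apply List.map_congr_left
    intro w hw
    have hwl : w ~ l := mem_permutations'.mp (List.mem_dedup.mp hw)
    rw [st16_S a w (fun x hx => ha x (hwl.mem_iff.mp hx)), hwl.length_eq]
  rw [h1]
  exact (((List.permutations_perm_permutations' l).dedup.symm).map _).sum_eq

lemma st16_baseList_lt (n : ℕ) : ∀ x ∈ baseList n, x < (n : ℤ) + 1 := by
  intro x hx
  simp only [baseList, List.mem_flatMap, List.mem_range] at hx
  obtain ⟨i, hi, hx⟩ := hx
  obtain ⟨j, hj, rfl⟩ : ∃ a < n, i = (a : ℤ) := by simpa using hi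
  simp only [List.mem_cons, List.mem_singleton] at hx
  rcases hx with rfl | hx
  · omega
  · simp at hx; omega

lemma st16_baseList_length (n : ℕ) : (baseList n).length = 2 * n := by
  induction n with
  | zero => rfl
  | succ m ih =>
    have : baseList (m + 1) = baseList m ++ [(m : ℤ) + 1, (m : ℤ) + 1] := by
      simp [baseList, List.range_succ]
    rw [this]
    simp [ih]
    omega

lemma st16_part3 (n : ℕ) :
    Qpoly n = ((1 + (2 * (n : Polynomial ℝ) - 1) * X) * Ppoly n
        + X * (1 - X) * derivative (Ppoly n)) + X * Ppoly n := by
  have h := st16_Qeq ((n : ℤ) + 1) (baseList n) (st16_baseList_lt n)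
  rw [st16_baseList_length n] at h
  simp only [Nat.cast_mul, Nat.cast_ofNat] at h
  have h2 := st16_listsum n (arrangements (baseList n))
  have hP : Ppoly n = ((arrangements (baseList n)).map
      (fun w => (X : Polynomial ℝ) ^ des w)).sum := rfl
  rw [show Qpoly n = desPoly (baseList n ++ [(n : ℤ) + 1]) from rfl, h, hP, ← h2]

lemma st16_key2 (k j : ℕ) (c : ℝ) :
    (1 + C (2 * ((k : ℝ) + (j : ℝ) + 1) - 1) * X) * (C c * X ^ k * (1 + X) ^ (2 * j))
      + X * (1 - X) * derivative (C c * X ^ k * (1 + X) ^ (2 * j))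
    = C (((k : ℝ) + 1) * c) * X ^ k * (1 + X) ^ (2 * j + 1)
      + C (4 * (j : ℝ) * c) * X ^ (k + 1) * (1 + X) ^ (2 * j - 1) := by
  rw [derivative_mul, derivative_mul, derivative_C]
  cases j with
  | zero =>
    simp only [Nat.mul_zero, pow_zero, mul_one, derivative_one, mul_zero, zero_mul,
      add_zero, zero_add, Nat.cast_zero, Nat.zero_sub, pow_one]
    simp only [map_mul, map_add, map_one, map_ofNat, map_sub, map_zero]
    linear_combination ((1 : Polynomial ℝ) - X) * C c * st16_Xd k
  | succ s =>
    have e1 : 2 * (s + 1) = 2 * s + 1 + 1 := by omega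
    have hB : derivative ((1 + X : Polynomial ℝ) ^ (2 * s + 1 + 1))
        = C (((2 * s + 1 + 1 : ℕ) : ℝ)) * (1 + X) ^ (2 * s + 1) := by
      rw [derivative_pow]
      simp
    rw [e1, hB]
    push_cast
    simp only [map_mul, map_add, map_one, map_ofNat, map_sub]
    linear_combination ((1 : Polynomial ℝ) - X) * C c * ((1 + X) ^ (2 * s + 1 + 1)) * st16_Xd k

/-- With p_{n,k} the γ-coefficients of Pₙ(x) (given by their recurrence), the numbers
r_{n,k} = (k+1)p_{n,k} + 4(n-k)p_{n,k-1} are nonnegative and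
Rₙ(x) = (1+(2n-1)x)Pₙ(x) + x(1-x)Pₙ'(x) = Σ_k r_{n,k} x^k (1+x)^{2n-1-2k},
so Rₙ is γ-positive; consequently Qₙ(x) = Rₙ(x) + x Pₙ(x) is bi-γ-positive. -/
theorem stmt16 (p : ℕ → ℤ → ℝ)
    (hp10 : p 1 0 = 1) (hp1 : ∀ k : ℤ, k ≠ 0 → p 1 k = 0)
    (hprec : ∀ n : ℕ, 1 ≤ n → ∀ k : ℤ,
      p (n + 1) k = ((k : ℝ) + 2) * ((k : ℝ) + 1) / 2 * p n k
        + ((k : ℝ) + 1) * (4 * (n : ℝ) - 4 * (k : ℝ) + 1) * p n (k - 1)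
        + 4 * ((2 * (n : ℝ) - 2 * (k : ℝ) + 2) * (2 * (n : ℝ) - 2 * (k : ℝ) + 1) / 2)
            * p n (k - 2))
    (hgamma : ∀ n : ℕ, 1 ≤ n →
      Ppoly n = ∑ k ∈ Finset.range n, C (p n k) * X ^ k * (1 + X) ^ (2 * n - 2 - 2 * k)) :
    ∀ n : ℕ, 1 ≤ n →
      (∀ k : ℤ, 0 ≤ k →
        0 ≤ ((k : ℝ) + 1) * p n k + 4 * ((n : ℝ) - (k : ℝ)) * p n (k - 1)) ∧
      (1 + (2 * (n : Polynomial ℝ) - 1) * X) * Ppoly n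
          + X * (1 - X) * derivative (Ppoly n) =
        ∑ k ∈ Finset.range n,
          C (((k : ℝ) + 1) * p n k + 4 * ((n : ℝ) - (k : ℝ)) * p n (k - 1))
            * X ^ k * (1 + X) ^ (2 * n - 1 - 2 * k) ∧
      Qpoly n = ((1 + (2 * (n : Polynomial ℝ) - 1) * X) * Ppoly n
          + X * (1 - X) * derivative (Ppoly n)) + X * Ppoly n := by
  have hprops : ∀ n : ℕ, 1 ≤ n →
      (∀ k : ℤ, (k < 0 ∨ (n : ℤ) ≤ k) → p n k = 0) ∧ (∀ k : ℤ, 0 ≤ p n k) := by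
    intro n hn
    induction n, hn using Nat.le_induction with
    | base =>
      constructor
      · intro k hk
        apply hp1; omega
      · intro k
        by_cases h : k = 0
        · rw [h, hp10]; norm_num
        · rw [hp1 k h]
    | succ n hn ih =>
      obtain ⟨ih0, ihpos⟩ := ih
      constructor
      · intro k hk
        rw [hprec n hn k]
        rcases hk with hk | hk
        · rw [ih0 k (Or.inl hk), ih0 (k - 1) (Or.inl (by omega)),
            ih0 (k - 2) (Or.inl (by omega))]
          ring
        · have hk' : (n : ℤ) + 1 ≤ k := by push_cast at hk; omega
          rw [ih0 k (Or.inr (by omega)), ih0 (k - 1) (Or.inr (by omega))]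
          by_cases h2 : (n : ℤ) ≤ k - 2
          · rw [ih0 (k - 2) (Or.inr h2)]; ring
          · have hkeq : k = (n : ℤ) + 1 := by omega
            have hkR : (k : ℝ) = (n : ℝ) + 1 := by rw [hkeq]; push_cast; ring
            rw [hkR]; ring
      · intro k
        rw [hprec n hn k]
        by_cases hk0 : k < 0
        · rw [ih0 k (Or.inl hk0), ih0 (k - 1) (Or.inl (by omega)),
            ih0 (k - 2) (Or.inl (by omega))]
          norm_num
        · push_neg at hk0
          have hkR : (0 : ℝ) ≤ (k : ℝ) := by exact_mod_cast hk0
          have t1 : 0 ≤ ((k : ℝ) + 2) * ((k : ℝ) + 1) / 2 * p n k := by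
            have h1 : (0:ℝ) ≤ ((k : ℝ) + 2) * ((k : ℝ) + 1) / 2 := by nlinarith
            exact mul_nonneg h1 (ihpos k)
          have t2 : 0 ≤ ((k : ℝ) + 1) * (4 * (n : ℝ) - 4 * (k : ℝ) + 1) * p n (k - 1) := by
            by_cases h2 : (n : ℤ) ≤ k - 1
            · rw [ih0 (k - 1) (Or.inr h2)]; simp
            · have hkn : (k : ℝ) ≤ (n : ℝ) := by
                have : k ≤ (n : ℤ) := by omega
                exact_mod_cast this
              have h1 : (0:ℝ) ≤ ((k : ℝ) + 1) * (4 * (n : ℝ) - 4 * (k : ℝ) + 1) := by nlinarith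
              exact mul_nonneg h1 (ihpos (k - 1))
          have t3 : 0 ≤ 4 * ((2 * (n : ℝ) - 2 * (k : ℝ) + 2) * (2 * (n : ℝ) - 2 * (k : ℝ) + 1) / 2)
              * p n (k - 2) := by
            by_cases h2 : (n : ℤ) ≤ k - 2
            · rw [ih0 (k - 2) (Or.inr h2)]; simp
            · by_cases h3 : k = (n : ℤ) + 1
              · have hkR2 : (k : ℝ) = (n : ℝ) + 1 := by rw [h3]; push_cast; ring
                have hz : (2 * (n : ℝ) - 2 * (k : ℝ) + 2) = 0 := by rw [hkR2]; ring
                rw [hz]; simp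
              · have hkn : (k : ℝ) ≤ (n : ℝ) := by
                  have : k ≤ (n : ℤ) := by omega
                  exact_mod_cast this
                have h1 : (0:ℝ) ≤ 4 * ((2 * (n : ℝ) - 2 * (k : ℝ) + 2)
                    * (2 * (n : ℝ) - 2 * (k : ℝ) + 1) / 2) := by nlinarith
                exact mul_nonneg h1 (ihpos (k - 2))
          linarith
  intro n hn
  obtain ⟨h0, hpos⟩ := hprops n hn
  refine ⟨?_, ?_, st16_part3 n⟩
  · intro k hk
    by_cases hkn : (n : ℤ) ≤ k - 1
    · rw [h0 k (Or.inr (by omega)), h0 (k - 1) (Or.inr hkn)]; norm_num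
    · have hknR : (k : ℝ) ≤ (n : ℝ) := by
        have : k ≤ (n : ℤ) := by omega
        exact_mod_cast this
      have hkR : (0 : ℝ) ≤ (k : ℝ) := by exact_mod_cast hk
      have t1 : 0 ≤ ((k : ℝ) + 1) * p n k := mul_nonneg (by linarith) (hpos k)
      have t2 : 0 ≤ 4 * ((n : ℝ) - (k : ℝ)) * p n (k - 1) :=
        mul_nonneg (by linarith) (hpos (k - 1))
      linarith
  · rw [hgamma n hn, map_sum, Finset.mul_sum, Finset.mul_sum, ← Finset.sum_add_distrib]
    have hstep : ∀ k ∈ Finset.range n,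
        (1 + (2 * (n : Polynomial ℝ) - 1) * X) * (C (p n k) * X ^ k * (1 + X) ^ (2 * n - 2 - 2 * k))
          + X * (1 - X) * derivative (C (p n k) * X ^ k * (1 + X) ^ (2 * n - 2 - 2 * k))
        = C (((k : ℝ) + 1) * p n k) * X ^ k * (1 + X) ^ (2 * n - 1 - 2 * k)
          + C (4 * ((n : ℝ) - 1 - (k : ℝ)) * p n k) * X ^ (k + 1)
            * (1 + X) ^ (2 * (n - 1 - k) - 1) := by
      intro k hk
      have hkn : k < n := Finset.mem_range.mp hk
      have e0 : ((n - 1 - k : ℕ) : ℝ) = (n : ℝ) - 1 - (k : ℝ) := by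
        rw [Nat.sub_sub, Nat.cast_sub (by omega)]
        push_cast
        ring
      have e1 : 2 * n - 2 - 2 * k = 2 * (n - 1 - k) := by omega
      have e2 : 2 * n - 1 - 2 * k = 2 * (n - 1 - k) + 1 := by omega
      rw [e1, e2]
      have hkey := st16_key2 k (n - 1 - k) (p n k)
      rw [e0] at hkey
      have e3 : C (2 * ((k : ℝ) + ((n : ℝ) - 1 - (k : ℝ)) + 1) - 1)
          = 2 * (n : Polynomial ℝ) - 1 := by
        have : 2 * ((k : ℝ) + ((n : ℝ) - 1 - (k : ℝ)) + 1) - 1 = 2 * (n : ℝ) - 1 := by ring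
        rw [this, map_sub, map_mul, map_one, map_ofNat, C_eq_natCast]
      rw [e3] at hkey
      exact hkey
    rw [Finset.sum_congr rfl hstep, Finset.sum_add_distrib]
    have hsec : (∑ k ∈ Finset.range n, C (4 * ((n : ℝ) - 1 - (k : ℝ)) * p n k) * X ^ (k + 1)
          * (1 + X) ^ (2 * (n - 1 - k) - 1))
        = ∑ k ∈ Finset.range n, C (4 * ((n : ℝ) - (k : ℝ)) * p n ((k : ℤ) - 1)) * X ^ k
          * (1 + X) ^ (2 * n - 1 - 2 * k) := by
      obtain ⟨m, rfl⟩ : ∃ m, n = m + 1 := ⟨n - 1, by omega⟩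
      rw [Finset.sum_range_succ]
      conv_rhs => rw [Finset.sum_range_succ']
      have hlast : C (4 * (((m + 1 : ℕ) : ℝ) - 1 - (m : ℝ)) * p (m + 1) m) * X ^ (m + 1)
          * (1 + X) ^ (2 * ((m + 1) - 1 - m) - 1) = 0 := by
        have : 4 * (((m + 1 : ℕ) : ℝ) - 1 - (m : ℝ)) * p (m + 1) m = 0 * p (m+1) m := by
          push_cast; ring
        rw [this, zero_mul, map_zero, zero_mul, zero_mul]
      have hfirst : C (4 * (((m + 1 : ℕ) : ℝ) - ((0:ℕ) : ℝ)) * p (m + 1) (((0:ℕ) : ℤ) - 1)) * X ^ (0:ℕ)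
          * (1 + X) ^ (2 * (m + 1) - 1 - 2 * 0) = 0 := by
        have hm1 : 1 ≤ m + 1 := by omega
        have : p (m + 1) (((0:ℕ) : ℤ) - 1) = 0 :=
          (hprops (m + 1) hm1).1 _ (Or.inl (by norm_num))
        rw [this, mul_zero, map_zero, zero_mul, zero_mul]
      rw [hlast, hfirst, add_zero, add_zero]
      apply Finset.sum_congr rfl
      intro k hk
      have hkm : k < m := Finset.mem_range.mp hk
      have ez : ((k + 1 : ℕ) : ℤ) - 1 = (k : ℤ) := by push_cast; ring
      have ec : 4 * (((m + 1 : ℕ) : ℝ) - ((k + 1 : ℕ) : ℝ)) * p (m + 1) ((k:ℤ))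
          = 4 * (((m + 1 : ℕ) : ℝ) - 1 - (k : ℝ)) * p (m + 1) k := by
        push_cast; ring
      have ee : 2 * (m + 1) - 1 - 2 * (k + 1) = 2 * ((m + 1) - 1 - k) - 1 := by omega
      rw [ez, ec, ee]
    rw [hsec, ← Finset.sum_add_distrib]
    apply Finset.sum_congr rfl
    intro k _
    rw [map_add]
    ring
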